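/- arXiv:1812.03883 — 3 statements merged into one kernel-verified Lean document; each statement's English description precedes it below -/
import Mathlib

section
/- The set of complex Hermitian positive semidefinite 2×2 matrices of trace 1 is homeomorphic to the closed unit ball in ℝ³, i.e. there is a homeomorphism between {A : 2×2 complex matrix | A is Hermitian, A is positive semidefinite, tr A = 1} (with the subspace topology from the space of 2×2 complex matrices) and the closed unit ball in the Euclidean space ℝ³. -/
open scoped ComplexOrder

section BlochAux

open Complex Matrix

noncomputable def blochMat (p : EuclideanSpace ℝ (Fin 3)) : Matrix (Fin 2) (Fin 2) ℂ :=
  !![((1 + p 2)/2 : ℝ), ((p 0 : ℂ) + (p 1 : ℝ) * I)/2;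
     ((p 0 : ℂ) - (p 1 : ℝ) * I)/2, ((1 - p 2)/2 : ℝ)]

noncomputable def blochCoord (A : Matrix (Fin 2) (Fin 2) ℂ) : EuclideanSpace ℝ (Fin 3) :=
  WithLp.toLp 2 ![2*(A 0 1).re, 2*(A 0 1).im, 2*(A 0 0).re - 1]

lemma blochMat_herm (p : EuclideanSpace ℝ (Fin 3)) : (blochMat p).IsHermitian := by
  ext i j
  fin_cases i <;> fin_cases j <;>
    simp [blochMat, Matrix.conjTranspose_apply, Complex.ext_iff]

lemma blochMat_trace (p : EuclideanSpace ℝ (Fin 3)) : (blochMat p).trace = 1 := by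
  simp only [blochMat, Matrix.trace_fin_two, Matrix.cons_val', Matrix.cons_val_zero,
    Matrix.cons_val_one, Matrix.head_cons, Matrix.of_apply, Matrix.empty_val',
    Matrix.cons_val_fin_one, Matrix.head_fin_const]
  push_cast
  ring

lemma bloch_aux_ineq {a d A B C : ℝ} (ha : 0 ≤ a) (hd : 0 ≤ d) (hA : 0 ≤ A) (hB : 0 ≤ B)
    (hC : 0 ≤ C) (hb : B^2 ≤ a * d) : 2 * (A * B * C) ≤ a * A^2 + d * C^2 := by
  have h1 : B ≤ Real.sqrt a * Real.sqrt d := by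
    rw [← Real.sqrt_mul_self hB, ← Real.sqrt_mul ha]
    exact Real.sqrt_le_sqrt (by nlinarith)
  nlinarith [sq_nonneg (Real.sqrt a * A - Real.sqrt d * C), Real.sq_sqrt ha, Real.sq_sqrt hd,
    Real.sqrt_nonneg a, Real.sqrt_nonneg d, mul_nonneg (mul_nonneg hA hC)
      (sub_nonneg.2 h1)]

lemma blochMat_psd (p : EuclideanSpace ℝ (Fin 3))
    (hp : p 0 ^ 2 + p 1 ^ 2 + p 2 ^ 2 ≤ 1) : (blochMat p).PosSemidef := by
  refine Matrix.PosSemidef.of_dotProduct_mulVec_nonneg (blochMat_herm p) fun x => ?_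
  set a : ℝ := (1 + p 2)/2 with ha_def
  set d : ℝ := (1 - p 2)/2 with hd_def
  set b : ℂ := ((p 0 : ℂ) + (p 1 : ℝ) * I)/2 with hb_def
  have hQ : star x ⬝ᵥ blochMat p *ᵥ x =
      ((a * Complex.normSq (x 0) + d * Complex.normSq (x 1)
        + 2 * ((starRingEnd ℂ) (x 0) * b * (x 1)).re : ℝ) : ℂ) := by
    simp only [dotProduct, Matrix.mulVec, Fin.sum_univ_two, Pi.star_apply,
      blochMat, Matrix.cons_val', Matrix.cons_val_zero, Matrix.cons_val_one,
      Matrix.head_cons, Matrix.head_fin_const, Matrix.of_apply, Matrix.empty_val',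
      Matrix.cons_val_fin_one, RCLike.star_def]
    simp [Complex.ext_iff, Complex.normSq_apply, hb_def]
    ring_nf
    exact ⟨by rw [ha_def, hd_def]; ring, trivial⟩
  rw [hQ]
  rw [Complex.zero_le_real]
  have ha : 0 ≤ a := by nlinarith [sq_nonneg (p 0), sq_nonneg (p 1), sq_nonneg (1 + p 2)]
  have hd : 0 ≤ d := by nlinarith [sq_nonneg (p 0), sq_nonneg (p 1), sq_nonneg (1 - p 2)]
  have hb2 : ‖b‖ ^ 2 ≤ a * d := by
    rw [Complex.sq_norm, hb_def]
    simp [Complex.normSq_apply]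
    nlinarith
  have hre : -(‖x 0‖ * ‖b‖ * ‖x 1‖)
      ≤ ((starRingEnd ℂ) (x 0) * b * (x 1)).re := by
    have := Complex.abs_re_le_norm ((starRingEnd ℂ) (x 0) * b * (x 1))
    have habs : ‖(starRingEnd ℂ) (x 0) * b * (x 1)‖
        = ‖x 0‖ * ‖b‖ * ‖x 1‖ := by
      simp [_root_.map_mul]
    nlinarith [neg_abs_le ((starRingEnd ℂ) (x 0) * b * (x 1)).re]
  have key := bloch_aux_ineq ha hd (norm_nonneg (x 0)) (norm_nonneg b)
    (norm_nonneg (x 1)) hb2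
  have h0 : Complex.normSq (x 0) = ‖x 0‖ ^ 2 := (Complex.sq_norm _).symm
  have h1 : Complex.normSq (x 1) = ‖x 1‖ ^ 2 := (Complex.sq_norm _).symm
  nlinarith [hre, key]

lemma psd_coords_le {A : Matrix (Fin 2) (Fin 2) ℂ} (hA : A.PosSemidef) (ht : A.trace = 1) :
    (2*(A 0 1).re)^2 + (2*(A 0 1).im)^2 + (2*(A 0 0).re - 1)^2 ≤ 1 := by
  have herm := hA.1
  set a : ℝ := (A 0 0).re with ha_def
  set d : ℝ := (A 1 1).re with hd_def
  set b : ℂ := A 0 1 with hb_def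
  have h00 : A 0 0 = (a : ℝ) := by
    have := herm.apply 0 0
    rw [RCLike.star_def] at this
    refine Complex.ext rfl ?_
    have h2 := congrArg Complex.im this
    simp at h2
    simpa using by linarith
  have h11 : A 1 1 = (d : ℝ) := by
    have := herm.apply 1 1
    rw [RCLike.star_def] at this
    refine Complex.ext rfl ?_
    have h2 := congrArg Complex.im this
    simp at h2
    simpa using by linarith
  have h10 : A 1 0 = (starRingEnd ℂ) b := by
    have := herm.apply 1 0
    rw [RCLike.star_def] at this
    rw [← this, hb_def]
  have ha : 0 ≤ a := by
    have h := hA.dotProduct_mulVec_nonneg ![1, 0]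
    have hq : star ![(1:ℂ), 0] ⬝ᵥ A *ᵥ ![1, 0] = A 0 0 := by
      simp [dotProduct, Matrix.mulVec, Fin.sum_univ_two]
    rw [hq, h00] at h
    exact_mod_cast (Complex.zero_le_real).mp h
  have hd : 0 ≤ d := by
    have h := hA.dotProduct_mulVec_nonneg ![0, 1]
    have hq : star ![(0:ℂ), 1] ⬝ᵥ A *ᵥ ![0, 1] = A 1 1 := by
      simp [dotProduct, Matrix.mulVec, Fin.sum_univ_two]
    rw [hq, h11] at h
    exact_mod_cast (Complex.zero_le_real).mp h
  have hsum : a + d = 1 := by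
    have := ht
    rw [Matrix.trace_fin_two, h00, h11, ← Complex.ofReal_add] at this
    exact_mod_cast this
  have key : ∀ t : ℝ, 0 ≤ (a * Complex.normSq b) * (t * t) + (-(2 * Complex.normSq b)) * t + d := by
    intro t
    have h := hA.dotProduct_mulVec_nonneg ![-(t:ℂ) * b, 1]
    have hq : star ![-(t:ℂ) * b, 1] ⬝ᵥ A *ᵥ ![-(t:ℂ) * b, 1]
        = (((a * Complex.normSq b) * (t * t) + (-(2 * Complex.normSq b)) * t + d : ℝ) : ℂ) := by
      simp only [dotProduct, Matrix.mulVec, Fin.sum_univ_two, Pi.star_apply,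
        Matrix.cons_val_zero, Matrix.cons_val_one, Matrix.head_cons, RCLike.star_def,
        h00, h11, h10, ← hb_def]
      simp [Complex.ext_iff, Complex.normSq_apply]
      ring_nf
      constructor <;> trivial
    rw [hq] at h
    exact (Complex.zero_le_real).mp h
  have hdisc := discrim_le_zero key
  have hbd : Complex.normSq b ≤ a * d := by
    by_cases hb : b = 0
    · simp [hb]; positivity
    · have hpos : 0 < Complex.normSq b := Complex.normSq_pos.mpr hb
      rw [discrim] at hdisc
      nlinarith
  have hnsq : Complex.normSq b = b.re^2 + b.im^2 := by
    rw [Complex.normSq_apply]; ring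
  nlinarith

lemma blochCoord_continuous : Continuous blochCoord := by
  have entry : ∀ i j : Fin 2, Continuous fun A : Matrix (Fin 2) (Fin 2) ℂ => A i j :=
    fun i j => (continuous_apply j).comp (continuous_apply i)
  refine Continuous.comp (EuclideanSpace.equiv (Fin 3) ℝ).symm.continuous ?_
  refine continuous_pi fun i => ?_
  fin_cases i
  · exact (continuous_const.mul (Complex.continuous_re.comp (entry 0 1)) : _)
  · exact (continuous_const.mul (Complex.continuous_im.comp (entry 0 1)) : _)
  · exact ((continuous_const.mul (Complex.continuous_re.comp (entry 0 0))).sub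
      continuous_const : _)

lemma blochMat_continuous : Continuous blochMat := by
  have hc : ∀ i : Fin 3, Continuous fun p : EuclideanSpace ℝ (Fin 3) => p i :=
    fun i => (continuous_apply i).comp (EuclideanSpace.equiv (Fin 3) ℝ).continuous
  have hcr : ∀ i : Fin 3, Continuous fun p : EuclideanSpace ℝ (Fin 3) => ((p i : ℝ) : ℂ) :=
    fun i => Complex.continuous_ofReal.comp (hc i)
  refine continuous_matrix fun i j => ?_
  fin_cases i <;> fin_cases j
  · exact ((Complex.continuous_ofReal.comp
      (((continuous_const.add (hc 2))).div_const 2)) : _)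
  · exact (((hcr 0).add ((hcr 1).mul continuous_const)).div_const 2 : _)
  · exact (((hcr 0).sub ((hcr 1).mul continuous_const)).div_const 2 : _)
  · exact ((Complex.continuous_ofReal.comp
      (((continuous_const.sub (hc 2))).div_const 2)) : _)

lemma mem_ball_iff_sum_sq (p : EuclideanSpace ℝ (Fin 3)) :
    p ∈ Metric.closedBall (0 : EuclideanSpace ℝ (Fin 3)) 1 ↔
      p 0 ^ 2 + p 1 ^ 2 + p 2 ^ 2 ≤ 1 := by
  rw [Metric.mem_closedBall, dist_zero_right, EuclideanSpace.norm_eq]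
  have hsum : ∑ i : Fin 3, ‖p i‖ ^ 2 = p 0 ^ 2 + p 1 ^ 2 + p 2 ^ 2 := by
    simp [Fin.sum_univ_three, Real.norm_eq_abs, sq_abs]
  rw [hsum]
  exact Real.sqrt_le_one

lemma blochCoord_mem {A : Matrix (Fin 2) (Fin 2) ℂ} (hP : A.PosSemidef) (hT : A.trace = 1) :
    blochCoord A ∈ Metric.closedBall (0 : EuclideanSpace ℝ (Fin 3)) 1 := by
  rw [mem_ball_iff_sum_sq]
  simpa [blochCoord] using psd_coords_le hP hT

end BlochAux

/-- The set of complex Hermitian positive semidefinite `2×2` matrices of trace `1`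
(with the subspace topology from the space of `2×2` matrices) is homeomorphic
to the closed unit ball in the Euclidean space `ℝ³`. -/
theorem trace_one_psd_hermitian_homeomorph_ball :
    Nonempty
      ({A : Matrix (Fin 2) (Fin 2) ℂ // A.IsHermitian ∧ A.PosSemidef ∧ A.trace = 1} ≃ₜ
        (Metric.closedBall (0 : EuclideanSpace ℝ (Fin 3)) 1)) := by
  refine ⟨{
    toFun := fun A => ⟨blochCoord A.1, blochCoord_mem A.2.2.1 A.2.2.2⟩
    invFun := fun p => ⟨blochMat p.1, blochMat_herm p.1,
      blochMat_psd p.1 ((mem_ball_iff_sum_sq p.1).mp p.2), blochMat_trace p.1⟩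
    left_inv := ?_
    right_inv := ?_
    continuous_toFun := (blochCoord_continuous.comp continuous_subtype_val).subtype_mk _
    continuous_invFun := (blochMat_continuous.comp continuous_subtype_val).subtype_mk _ }⟩
  · rintro ⟨A, hH, hP, hT⟩
    ext i j
    have h00 : A 0 0 = ((A 0 0).re : ℝ) := by
      have := hH.apply 0 0
      rw [RCLike.star_def] at this
      refine Complex.ext rfl ?_
      have h2 := congrArg Complex.im this
      simp at h2
      simpa using by linarith
    have h11 : A 1 1 = ((A 1 1).re : ℝ) := by
      have := hH.apply 1 1
      rw [RCLike.star_def] at this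
      refine Complex.ext rfl ?_
      have h2 := congrArg Complex.im this
      simp at h2
      simpa using by linarith
    have h10 : A 1 0 = (starRingEnd ℂ) (A 0 1) := by
      have := hH.apply 1 0
      rw [RCLike.star_def] at this
      rw [← this]
    have hsum : (A 0 0).re + (A 1 1).re = 1 := by
      have := hT
      rw [Matrix.trace_fin_two, h00, h11, ← Complex.ofReal_add] at this
      exact_mod_cast this
    fin_cases i <;> fin_cases j
    · show ((1 + blochCoord A 2)/2 : ℝ) = A 0 0
      rw [h00]
      simp [blochCoord, Complex.ext_iff]
      try ring
    · show ((((blochCoord A 0 : ℝ) : ℂ) + ((blochCoord A 1 : ℝ) : ℂ) * Complex.I)/2) = A 0 1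
      simp [blochCoord, Complex.ext_iff]
      try constructor <;> ring
      try ring
    · show ((((blochCoord A 0 : ℝ) : ℂ) - ((blochCoord A 1 : ℝ) : ℂ) * Complex.I)/2) = A 1 0
      rw [h10]
      simp [blochCoord, Complex.ext_iff]
      try constructor <;> ring
      try ring
    · show ((1 - blochCoord A 2)/2 : ℝ) = A 1 1
      rw [h11]
      simp [blochCoord, Complex.ext_iff]
      linarith [hsum]
  · rintro ⟨p, hp⟩
    ext i
    fin_cases i
    · show 2 * ((blochMat p) 0 1).re = p 0
      simp [blochMat]
      ring
    · show 2 * ((blochMat p) 0 1).im = p 1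
      simp [blochMat]
      ring
    · show 2 * ((blochMat p) 0 0).re - 1 = p 2
      simp [blochMat]
      ring
end

section
/- For every 2×2 real matrix g with det g = 1, let a(x) denote the positive semidefinite square root of (g·n(x))ᵀ(g·n(x)) where n(x) = [[1,x],[0,1]], let b(x) = a(x)/tr(a(x)), and let k(x) = g·n(x)·a(x)⁻¹ be the rotation factor of the polar decomposition of g·n(x). Then: (i) b(x) converges to the projection [[0,0],[0,1]] both as x → +∞ and as x → −∞; (ii) there exists k∞ ∈ SO(2) such that k(x) → k∞ as x → −∞ and k(x) → −k∞ as x → +∞. Thus the closure of each right N₊-orbit meets the boundary of the compactification in exactly two antipodal points ±k∞ paired with the fixed projection q₁(N₊) = [[0,0],[0,1]]. -/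
open Matrix Filter Topology

private lemma aux_inv_atBot : Tendsto (fun r : ℝ => r⁻¹) atBot (𝓝 0) := by
  have h1 : Tendsto (fun x : ℝ => (-x)⁻¹) atBot (𝓝 0) :=
    tendsto_inv_atTop_zero.comp tendsto_neg_atBot_atTop
  have h2 : Tendsto (fun x : ℝ => -(-x)⁻¹) atBot (𝓝 (-0)) := h1.neg
  simp only [neg_zero] at h2
  exact h2.congr (fun x => by rw [inv_neg, neg_neg])

private lemma aux_quad (A B C e f : ℝ) (hA : 0 < A)
    (hD : ∀ x : ℝ, 0 < A*x^2 + B*x + C) :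
    Tendsto (fun x : ℝ => (e*x+f)/(A*x^2+B*x+C)) atTop (𝓝 0) ∧
    Tendsto (fun x : ℝ => (e*x+f)/(A*x^2+B*x+C)) atBot (𝓝 0) := by
  set F : ℝ → ℝ := fun y => (e*y+f*y^2)/(A+B*y+C*y^2) with hF
  have hcont : ContinuousAt F 0 := by
    apply ContinuousAt.div (by fun_prop) (by fun_prop)
    simpa using hA.ne'
  have hF0 : F 0 = 0 := by simp [hF]
  have key : ∀ x : ℝ, x ≠ 0 → F x⁻¹ = (e*x+f)/(A*x^2+B*x+C) := by
    intro x hx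
    have hden : A + B*x⁻¹ + C*(x⁻¹)^2 = (A*x^2+B*x+C) * (x⁻¹)^2 := by
      field_simp
    simp only [hF]
    rw [hden, show e*x⁻¹+f*(x⁻¹)^2 = (e*x+f)*(x⁻¹)^2 by field_simp,
      mul_div_mul_right _ _ (by positivity : ((x:ℝ)⁻¹)^2 ≠ 0)]
  have h1 := hcont.tendsto
  rw [hF0] at h1
  constructor
  · refine (h1.comp tendsto_inv_atTop_zero).congr' ?_
    filter_upwards [eventually_gt_atTop (0:ℝ)] with x hx
    exact key x hx.ne'
  · refine (h1.comp aux_inv_atBot).congr' ?_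
    filter_upwards [eventually_lt_atBot (0:ℝ)] with x hx
    exact key x hx.ne

private lemma aux_sqrt (A B C e f : ℝ) (hA : 0 < A)
    (hD : ∀ x : ℝ, 0 < A*x^2 + B*x + C) :
    Tendsto (fun x : ℝ => (e*x+f)/Real.sqrt (A*x^2+B*x+C)) atTop (𝓝 (e/Real.sqrt A)) ∧
    Tendsto (fun x : ℝ => (e*x+f)/Real.sqrt (A*x^2+B*x+C)) atBot (𝓝 (-(e/Real.sqrt A))) := by
  set F : ℝ → ℝ := fun y => (e+f*y)/Real.sqrt (A+B*y+C*y^2) with hF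
  have hcont : ContinuousAt F 0 := by
    apply ContinuousAt.div (by fun_prop) (by fun_prop)
    have h0 : A + B*0 + C*0^2 = A := by ring
    show Real.sqrt (A + B*0 + C*0^2) ≠ 0
    rw [h0]
    exact (Real.sqrt_pos.2 hA).ne'
  have hF0 : F 0 = e / Real.sqrt A := by simp [hF]
  have hdenpos : ∀ x : ℝ, x ≠ 0 → 0 < A + B*x⁻¹ + C*(x⁻¹)^2 := by
    intro x hx
    have hden : A + B*x⁻¹ + C*(x⁻¹)^2 = (A*x^2+B*x+C) * (x⁻¹)^2 := by field_simp
    rw [hden]; exact mul_pos (hD x) (by positivity)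
  have hsq : ∀ x : ℝ, x ≠ 0 →
      Real.sqrt (A*x^2+B*x+C) = |x| * Real.sqrt (A+B*x⁻¹+C*(x⁻¹)^2) := by
    intro x hx
    rw [← Real.sqrt_sq_eq_abs, ← Real.sqrt_mul (sq_nonneg x)]
    congr 1
    field_simp
  have h1 := hcont.tendsto
  rw [hF0] at h1
  constructor
  · refine (h1.comp tendsto_inv_atTop_zero).congr' ?_
    filter_upwards [eventually_gt_atTop (0:ℝ)] with x hx
    show F x⁻¹ = _
    rw [hsq x hx.ne', abs_of_pos hx]
    simp only [hF]
    rw [← div_div, show (e*x+f)/x = e + f*x⁻¹ by field_simp]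
  · refine ((h1.comp aux_inv_atBot).neg).congr' ?_
    filter_upwards [eventually_lt_atBot (0:ℝ)] with x hx
    show -(F x⁻¹) = _
    rw [hsq x hx.ne, abs_of_neg hx]
    simp only [hF]
    rw [← div_div, show (e*x+f)/(-x) = -(e + f*x⁻¹) by
      rw [div_neg, neg_inj, div_eq_iff hx.ne, add_mul, inv_mul_cancel_right₀ hx.ne], neg_div]

private lemma aux_mat_tendsto {l : Filter ℝ} {f : ℝ → Matrix (Fin 2) (Fin 2) ℝ}
    {L : Matrix (Fin 2) (Fin 2) ℝ}
    (h : ∀ i j, Tendsto (fun x => f x i j) l (𝓝 (L i j))) : Tendsto f l (𝓝 L) := by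
  refine tendsto_pi_nhds.2 ?_
  intro i
  refine tendsto_pi_nhds.2 ?_
  intro j
  exact h i j

private lemma aux_transpose2 (a b c d : ℝ) : (!![a,b;c,d])ᵀ = !![a,c;b,d] := by
  rw [Matrix.eta_fin_two (!![a,b;c,d])ᵀ]
  simp

private lemma aux_smul2 (t a b c d : ℝ) : t • !![a,b;c,d] = !![t*a, t*b; t*c, t*d] := by
  rw [Matrix.eta_fin_two (t • !![a,b;c,d])]
  simp

open scoped MatrixOrder Matrix.Norms.L2Operator in
private lemma aux_psd_sq {A B : Matrix (Fin 2) (Fin 2) ℝ} (hA : A.PosSemidef) (hB : B.PosSemidef)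
    (h : A^2 = B^2) : A = B := by
  have hBB : (0 : Matrix (Fin 2) (Fin 2) ℝ) ≤ B * B := by
    rw [nonneg_iff_posSemidef]
    have := posSemidef_conjTranspose_mul_self B
    rwa [hB.1.eq] at this
  rw [pow_two, pow_two] at h
  have h1 := (CFC.sqrt_eq_iff (B*B) A hBB (nonneg_iff_posSemidef.2 hA)).2 h
  have h2 := (CFC.sqrt_eq_iff (B*B) B hBB (nonneg_iff_posSemidef.2 hB)).2 rfl
  rw [← h1, h2]

private lemma aux_mat2_eq {a b c d a' b' c' d' : ℝ} (h1 : a=a') (h2 : b=b') (h3 : c=c')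
    (h4 : d=d') : !![a,b;c,d] = !![a',b';c',d'] := by
  rw [h1, h2, h3, h4]

/-- For `g ∈ SL(2,ℝ)` let `g·n(x) = k(x)·a(x)` be the polar decomposition, where
`n(x) = [[1,x],[0,1]]`, `a(x)` is the positive semidefinite square root of
`(g·n(x))ᵀ(g·n(x))` and `k(x) = g·n(x)·a(x)⁻¹`, and let `b(x) = (tr a(x))⁻¹ • a(x)`.
Then `b(x) → [[0,0],[0,1]]` as `x → ±∞`, and there is `k∞ ∈ SO(2)` with
`k(x) → k∞` as `x → −∞` and `k(x) → −k∞` as `x → +∞`. -/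
theorem unipotent_orbit_limits (g : Matrix (Fin 2) (Fin 2) ℝ) (hg : g.det = 1)
    (a : ℝ → Matrix (Fin 2) (Fin 2) ℝ)
    (ha : ∀ x : ℝ, (a x).PosSemidef ∧
      a x * a x = (g * !![1, x; 0, 1])ᵀ * (g * !![1, x; 0, 1]))
    (b : ℝ → Matrix (Fin 2) (Fin 2) ℝ)
    (hb : ∀ x : ℝ, b x = ((a x).trace)⁻¹ • a x)
    (k : ℝ → Matrix (Fin 2) (Fin 2) ℝ)
    (hk : ∀ x : ℝ, k x = g * !![1, x; 0, 1] * (a x)⁻¹) :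
    Tendsto b atTop (𝓝 !![(0:ℝ), 0; 0, 1]) ∧
    Tendsto b atBot (𝓝 !![(0:ℝ), 0; 0, 1]) ∧
    ∃ kinf : Matrix (Fin 2) (Fin 2) ℝ, (kinfᵀ * kinf = 1 ∧ kinf.det = 1) ∧
      Tendsto k atBot (𝓝 kinf) ∧ Tendsto k atTop (𝓝 (-kinf)) := by
  obtain ⟨p, q, r, s, rfl⟩ : ∃ p q r s, g = !![p,q;r,s] :=
    ⟨_, _, _, _, Matrix.eta_fin_two g⟩
  rw [Matrix.det_fin_two_of] at hg
  -- hg : p * s - q * r = 1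
  have hα : 0 < p^2 + r^2 := by
    rcases eq_or_ne p 0 with h|h
    · rcases eq_or_ne r 0 with h'|h'
      · rw [h, h'] at hg; norm_num at hg
      · positivity
    · positivity
  have hDen : ∀ x : ℝ, 0 < (p*x+q)^2+(r*x+s)^2+(p^2+r^2)+2 := by
    intro x; positivity
  have hQ : ∀ x : ℝ, (p^2+r^2)*x^2 + (2*(p*q+r*s))*x + (q^2+s^2+(p^2+r^2)+2)
      = (p*x+q)^2+(r*x+s)^2+(p^2+r^2)+2 := by
    intro x; ring
  have hquad : ∀ x : ℝ, 0 < (p^2+r^2)*x^2 + (2*(p*q+r*s))*x + (q^2+s^2+(p^2+r^2)+2) := by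
    intro x; rw [hQ x]; exact hDen x
  set T : ℝ → ℝ := fun x => Real.sqrt ((p*x+q)^2+(r*x+s)^2+(p^2+r^2)+2) with hT_def
  have hT : ∀ x : ℝ, 0 < T x := fun x => Real.sqrt_pos.2 (hDen x)
  have hTT : ∀ x : ℝ, T x * T x = (p*x+q)^2+(r*x+s)^2+(p^2+r^2)+2 :=
    fun x => Real.mul_self_sqrt (hDen x).le
  have hGN : ∀ x : ℝ, !![p,q;r,s] * !![1,x;0,1] = !![p, p*x+q; r, r*x+s] := by
    intro x
    rw [Matrix.mul_fin_two]
    exact aux_mat2_eq (by ring) (by ring) (by ring) (by ring)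
  have hM : ∀ x : ℝ, (!![p,q;r,s] * !![1,x;0,1])ᵀ * (!![p,q;r,s] * !![1,x;0,1])
      = !![p^2+r^2, p*(p*x+q)+r*(r*x+s); p*(p*x+q)+r*(r*x+s), (p*x+q)^2+(r*x+s)^2] := by
    intro x
    rw [hGN, aux_transpose2, Matrix.mul_fin_two]
    exact aux_mat2_eq (by ring) (by ring) (by ring) (by ring)
  have hTinv : ∀ x : ℝ, (T x)⁻¹ * (T x)⁻¹ = ((p*x+q)^2+(r*x+s)^2+(p^2+r^2)+2)⁻¹ := by
    intro x; rw [← mul_inv, hTT]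
  -- explicit formula for the square root a x
  have haeq : ∀ x : ℝ, a x = (T x)⁻¹ •
      !![p^2+r^2+1, p*(p*x+q)+r*(r*x+s); p*(p*x+q)+r*(r*x+s), (p*x+q)^2+(r*x+s)^2+1] := by
    intro x
    have hEpsd : Matrix.PosSemidef ((T x)⁻¹ •
        !![p^2+r^2+1, p*(p*x+q)+r*(r*x+s); p*(p*x+q)+r*(r*x+s), (p*x+q)^2+(r*x+s)^2+1]) := by
      have ht : (0:ℝ) ≤ (T x)⁻¹ := inv_nonneg.2 (hT x).le
      refine Matrix.PosSemidef.of_dotProduct_mulVec_nonneg ?_ ?_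
      · show _ᴴ = _
        rw [conjTranspose_smul, conjTranspose_eq_transpose_of_trivial, aux_transpose2,
          star_trivial]
      · intro v
        simp [dotProduct, Matrix.mulVec, Fin.sum_univ_two]
        nlinarith [mul_nonneg ht (sq_nonneg (p*v 0 + (p*x+q)*v 1)),
          mul_nonneg ht (sq_nonneg (r*v 0 + (r*x+s)*v 1)),
          mul_nonneg ht (sq_nonneg (v 0)), mul_nonneg ht (sq_nonneg (v 1))]
    refine aux_psd_sq (ha x).1 hEpsd ?_
    rw [pow_two, pow_two, (ha x).2, hM x, Matrix.smul_mul, Matrix.mul_smul, smul_smul,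
      hTinv, Matrix.mul_fin_two, aux_smul2]
    refine aux_mat2_eq ?_ ?_ ?_ ?_
    · rw [inv_mul_eq_div, eq_div_iff (hDen x).ne']
      linear_combination ((p*s - q*r) + 1) * hg
    · rw [inv_mul_eq_div, eq_div_iff (hDen x).ne']
      ring
    · rw [inv_mul_eq_div, eq_div_iff (hDen x).ne']
      ring
    · rw [inv_mul_eq_div, eq_div_iff (hDen x).ne']
      linear_combination ((p*s - q*r) + 1) * hg
  -- trace of a x
  have htr : ∀ x : ℝ, (a x).trace = T x := by
    intro x
    rw [haeq x, Matrix.trace_smul, Matrix.trace_fin_two_of]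
    rw [smul_eq_mul]
    rw [show p^2+r^2+1 + ((p*x+q)^2+(r*x+s)^2+1) = T x * T x by rw [hTT]; ring]
    rw [inv_mul_cancel_left₀ (hT x).ne']
  -- explicit formula for b
  have hbeq : ∀ x : ℝ, b x =
      !![(0*x+(p^2+r^2+1))/((p^2+r^2)*x^2 + (2*(p*q+r*s))*x + (q^2+s^2+(p^2+r^2)+2)),
         ((p^2+r^2)*x+(p*q+r*s))/((p^2+r^2)*x^2 + (2*(p*q+r*s))*x + (q^2+s^2+(p^2+r^2)+2));
         ((p^2+r^2)*x+(p*q+r*s))/((p^2+r^2)*x^2 + (2*(p*q+r*s))*x + (q^2+s^2+(p^2+r^2)+2)),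
         ((p*x+q)^2+(r*x+s)^2+1)/((p^2+r^2)*x^2 + (2*(p*q+r*s))*x + (q^2+s^2+(p^2+r^2)+2))] := by
    intro x
    rw [hb, htr, haeq, smul_smul, hTinv, aux_smul2]
    refine aux_mat2_eq ?_ ?_ ?_ ?_ <;>
      · rw [hQ x, inv_mul_eq_div]
        try rw [div_eq_div_iff (hDen x).ne' (hDen x).ne']
        try ring
  -- inverse of a x
  have hainv : ∀ x : ℝ, (a x)⁻¹ = (T x)⁻¹ •
      !![(p*x+q)^2+(r*x+s)^2+1, -(p*(p*x+q)+r*(r*x+s));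
         -(p*(p*x+q)+r*(r*x+s)), p^2+r^2+1] := by
    intro x
    apply Matrix.inv_eq_right_inv
    rw [haeq x, Matrix.smul_mul, Matrix.mul_smul, smul_smul, hTinv, Matrix.mul_fin_two,
      aux_smul2, Matrix.one_fin_two]
    refine aux_mat2_eq ?_ ?_ ?_ ?_
    · rw [inv_mul_eq_div, div_eq_iff (hDen x).ne']
      linear_combination ((p*s - q*r) + 1) * hg
    · rw [inv_mul_eq_div, div_eq_iff (hDen x).ne']
      ring
    · rw [inv_mul_eq_div, div_eq_iff (hDen x).ne']
      ring
    · rw [inv_mul_eq_div, div_eq_iff (hDen x).ne']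
      linear_combination ((p*s - q*r) + 1) * hg
  -- explicit formula for k
  have hkeq : ∀ x : ℝ, k x =
      !![(r*x+(p+s))/Real.sqrt ((p^2+r^2)*x^2 + (2*(p*q+r*s))*x + (q^2+s^2+(p^2+r^2)+2)),
         (p*x+(q-r))/Real.sqrt ((p^2+r^2)*x^2 + (2*(p*q+r*s))*x + (q^2+s^2+(p^2+r^2)+2));
         ((-p)*x+(r-q))/Real.sqrt ((p^2+r^2)*x^2 + (2*(p*q+r*s))*x + (q^2+s^2+(p^2+r^2)+2)),
         (r*x+(p+s))/Real.sqrt ((p^2+r^2)*x^2 + (2*(p*q+r*s))*x + (q^2+s^2+(p^2+r^2)+2))] := by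
    intro x
    rw [hk, hainv, hGN, Matrix.mul_smul, Matrix.mul_fin_two, aux_smul2]
    have hTx : Real.sqrt ((p^2+r^2)*x^2 + (2*(p*q+r*s))*x + (q^2+s^2+(p^2+r^2)+2)) = T x := by
      rw [hT_def]; rw [hQ x]
    refine aux_mat2_eq ?_ ?_ ?_ ?_ <;>
      · rw [hTx, inv_mul_eq_div, div_eq_div_iff (hT x).ne' (hT x).ne']
        first
        | linear_combination ((r*x+s) * T x) * hg
        | linear_combination (-r * T x) * hg
        | linear_combination (-(p*x+q) * T x) * hg
        | linear_combination (p * T x) * hg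
  -- limits of b
  have hb_top : Tendsto b atTop (𝓝 !![(0:ℝ), 0; 0, 1]) ∧
      Tendsto b atBot (𝓝 !![(0:ℝ), 0; 0, 1]) := by
    rw [show b = _ from funext hbeq]
    have h1 := aux_quad (p^2+r^2) (2*(p*q+r*s)) (q^2+s^2+(p^2+r^2)+2) 0 (p^2+r^2+1) hα hquad
    have h2 := aux_quad (p^2+r^2) (2*(p*q+r*s)) (q^2+s^2+(p^2+r^2)+2) (p^2+r^2) (p*q+r*s)
      hα hquad
    have h3top : Tendsto (fun x : ℝ =>
        ((p*x+q)^2+(r*x+s)^2+1)/((p^2+r^2)*x^2 + (2*(p*q+r*s))*x + (q^2+s^2+(p^2+r^2)+2)))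
        atTop (𝓝 1) := by
      have := (tendsto_const_nhds (α := ℝ) (x := (1:ℝ)) (f := atTop)).sub h1.1
      rw [sub_zero] at this
      refine this.congr fun x => ?_
      rw [eq_div_iff (hquad x).ne', sub_mul, div_mul_cancel₀ _ (hquad x).ne', one_mul]
      ring
    have h3bot : Tendsto (fun x : ℝ =>
        ((p*x+q)^2+(r*x+s)^2+1)/((p^2+r^2)*x^2 + (2*(p*q+r*s))*x + (q^2+s^2+(p^2+r^2)+2)))
        atBot (𝓝 1) := by
      have := (tendsto_const_nhds (α := ℝ) (x := (1:ℝ)) (f := atBot)).sub h1.2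
      rw [sub_zero] at this
      refine this.congr fun x => ?_
      rw [eq_div_iff (hquad x).ne', sub_mul, div_mul_cancel₀ _ (hquad x).ne', one_mul]
      ring
    constructor
    · refine aux_mat_tendsto fun i j => ?_
      fin_cases i <;> fin_cases j <;>
        simp only [Fin.mk_zero, Fin.mk_one, Fin.isValue, Matrix.cons_val', Matrix.cons_val_zero,
          Matrix.cons_val_one, Matrix.head_cons, Matrix.empty_val', Matrix.cons_val_fin_one,
          Matrix.head_fin_const, Matrix.of_apply]
      · exact h1.1
      · exact h2.1
      · exact h2.1
      · exact h3top
    · refine aux_mat_tendsto fun i j => ?_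
      fin_cases i <;> fin_cases j <;>
        simp only [Fin.mk_zero, Fin.mk_one, Fin.isValue, Matrix.cons_val', Matrix.cons_val_zero,
          Matrix.cons_val_one, Matrix.head_cons, Matrix.empty_val', Matrix.cons_val_fin_one,
          Matrix.head_fin_const, Matrix.of_apply]
      · exact h1.2
      · exact h2.2
      · exact h2.2
      · exact h3bot
  refine ⟨hb_top.1, hb_top.2, ?_⟩
  -- the limit rotation
  set sa : ℝ := Real.sqrt (p^2+r^2) with hsa_def
  have hsa : sa ^ 2 = p^2+r^2 := Real.sq_sqrt hα.le
  have hsane : sa ≠ 0 := (Real.sqrt_pos.2 hα).ne'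
  refine ⟨!![-(r/sa), -(p/sa); p/sa, -(r/sa)], ⟨?_, ?_⟩, ?_, ?_⟩
  · rw [aux_transpose2, Matrix.mul_fin_two, Matrix.one_fin_two]
    refine aux_mat2_eq ?_ ?_ ?_ ?_ <;> field_simp <;> linarith [hsa]
  · rw [Matrix.det_fin_two_of]
    field_simp
    linarith [hsa]
  · -- atBot
    rw [show k = _ from funext hkeq]
    have h1 := (aux_sqrt (p^2+r^2) (2*(p*q+r*s)) (q^2+s^2+(p^2+r^2)+2) r (p+s) hα hquad).2
    have h2 := (aux_sqrt (p^2+r^2) (2*(p*q+r*s)) (q^2+s^2+(p^2+r^2)+2) p (q-r) hα hquad).2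
    have h3 := (aux_sqrt (p^2+r^2) (2*(p*q+r*s)) (q^2+s^2+(p^2+r^2)+2) (-p) (r-q) hα hquad).2
    rw [show -(-p/sa) = p/sa by rw [neg_div, neg_neg]] at h3
    refine aux_mat_tendsto fun i j => ?_
    fin_cases i <;> fin_cases j <;>
      simp only [Fin.mk_zero, Fin.mk_one, Fin.isValue, Matrix.cons_val', Matrix.cons_val_zero,
        Matrix.cons_val_one, Matrix.head_cons, Matrix.empty_val', Matrix.cons_val_fin_one,
        Matrix.head_fin_const, Matrix.of_apply]
    · exact h1
    · exact h2
    · exact h3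
    · exact h1
  · -- atTop
    rw [show k = _ from funext hkeq]
    have h1 := (aux_sqrt (p^2+r^2) (2*(p*q+r*s)) (q^2+s^2+(p^2+r^2)+2) r (p+s) hα hquad).1
    have h2 := (aux_sqrt (p^2+r^2) (2*(p*q+r*s)) (q^2+s^2+(p^2+r^2)+2) p (q-r) hα hquad).1
    have h3 := (aux_sqrt (p^2+r^2) (2*(p*q+r*s)) (q^2+s^2+(p^2+r^2)+2) (-p) (r-q) hα hquad).1
    have hneg : -(!![-(r/sa), -(p/sa); p/sa, -(r/sa)]) = !![r/sa, p/sa; -(p/sa), r/sa] := by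
      rw [Matrix.eta_fin_two (-(!![-(r/sa), -(p/sa); p/sa, -(r/sa)]))]
      exact aux_mat2_eq (by simp) (by simp) (by simp) (by simp)
    rw [hneg]
    rw [show (-p)/sa = -(p/sa) from neg_div sa p] at h3
    refine aux_mat_tendsto fun i j => ?_
    fin_cases i <;> fin_cases j <;>
      simp only [Fin.mk_zero, Fin.mk_one, Fin.isValue, Matrix.cons_val', Matrix.cons_val_zero,
        Matrix.cons_val_one, Matrix.head_cons, Matrix.empty_val', Matrix.cons_val_fin_one,
        Matrix.head_fin_const, Matrix.of_apply]
    · exact h1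
    · exact h2
    · exact h3
    · exact h1
end

section
/- Let f : SL(2,ℝ) → ℝ be continuous and satisfy the Harish-Chandra-type decay bound |f(h)| ≤ C · ‖h‖^{-1} · (2 + log(1 + ‖h‖))^{-3} for all h with det h = 1, where ‖·‖ is the Frobenius norm on 2×2 real matrices. Then for every g ∈ SL(2,ℝ) the function x ↦ f(g·[[1,x],[0,1]]) is integrable on ℝ, i.e. the average of f over the right orbit of the unipotent subgroup N₊ converges absolutely. -/
open Matrix Set MeasureTheory Filter

/-- The Frobenius norm of a real `2×2` matrix. -/
noncomputable def frobNorm (A : Matrix (Fin 2) (Fin 2) ℝ) : ℝ :=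
  Real.sqrt (∑ i : Fin 2, ∑ j : Fin 2, (A i j) ^ 2)

lemma frobNorm_explicit (A B C D : ℝ) :
    frobNorm !![A, B; C, D] = Real.sqrt (A^2 + B^2 + C^2 + D^2) := by
  have h00 : !![A, B; C, D] 0 0 = A := rfl
  have h01 : !![A, B; C, D] 0 1 = B := rfl
  have h10 : !![A, B; C, D] 1 0 = C := rfl
  have h11 : !![A, B; C, D] 1 1 = D := rfl
  simp only [frobNorm, Fin.sum_univ_two, h00, h01, h10, h11]
  ring_nf

lemma mul_n_eq (g : Matrix (Fin 2) (Fin 2) ℝ) (x : ℝ) :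
    g * !![1, x; 0, 1] = !![g 0 0, g 0 0 * x + g 0 1; g 1 0, g 1 0 * x + g 1 1] := by
  conv_lhs => rw [Matrix.eta_fin_two g]
  rw [Matrix.mul_fin_two]
  ext i j
  fin_cases i <;> fin_cases j <;> simp

lemma frob_lower (a b c d x : ℝ) :
    Real.sqrt (a^2 + c^2) * |x| - Real.sqrt (b^2 + d^2) ≤
      Real.sqrt (a^2 + (a*x+b)^2 + c^2 + (c*x+d)^2) := by
  set s := Real.sqrt (a^2 + c^2) with hs
  set t := Real.sqrt (b^2 + d^2) with ht
  set F := Real.sqrt (a^2 + (a*x+b)^2 + c^2 + (c*x+d)^2) with hF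
  have hFnn : 0 ≤ F := Real.sqrt_nonneg _
  rcases le_or_gt (s * |x| - t) 0 with h | h
  · linarith
  · have hs2 : s^2 = a^2 + c^2 := Real.sq_sqrt (by positivity)
    have ht2 : t^2 = b^2 + d^2 := Real.sq_sqrt (by positivity)
    have hF2 : F^2 = a^2 + (a*x+b)^2 + c^2 + (c*x+d)^2 := Real.sq_sqrt (by positivity)
    have hCS : |a*b + c*d| ≤ s * t := by
      have h1 : (a*b + c*d)^2 ≤ (a^2+c^2) * (b^2+d^2) := by nlinarith [sq_nonneg (a*d - b*c)]
      have h2 : |a*b + c*d| = Real.sqrt ((a*b + c*d)^2) := (Real.sqrt_sq_eq_abs _).symm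
      rw [h2, hs, ht, ← Real.sqrt_mul (by positivity)]
      exact Real.sqrt_le_sqrt h1
    have hkey : (s * |x| - t)^2 ≤ F^2 := by
      have h3 : -(s * t * |x|) ≤ (a*b + c*d) * x := by
        have := neg_abs_le ((a*b + c*d) * x)
        have h4 : |(a*b + c*d) * x| = |a*b + c*d| * |x| := abs_mul _ _
        nlinarith [abs_nonneg x]
      nlinarith [sq_abs x]
    calc s * |x| - t = Real.sqrt ((s * |x| - t)^2) := (Real.sqrt_sq h.le).symm
      _ ≤ Real.sqrt (F^2) := Real.sqrt_le_sqrt hkey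
      _ = F := Real.sqrt_sq hFnn

lemma majorant_integrable (s t R : ℝ) (hs : 0 < s) (hR : 2 ≤ s * R - t) :
    IntegrableOn
      (fun x : ℝ => ((1 + (s * x - t)) * (2 + Real.log (1 + (s * x - t))) ^ 3)⁻¹)
      (Ioi R) := by
  have key : ∀ x ∈ Ici R, 2 ≤ s * x - t := by
    intro x hx
    have : s * R ≤ s * x := by nlinarith [hx.out]
    linarith
  apply integrableOn_Ioi_deriv_of_nonneg'
    (g := fun x : ℝ => -(2 * s)⁻¹ * ((2 + Real.log (1 + (s * x - t))) ^ 2)⁻¹)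
    (l := 0)
  · intro x hx
    have hk := key x hx
    have hu : (0:ℝ) < 1 + (s * x - t) := by linarith
    have hw : (0:ℝ) < 2 + Real.log (1 + (s * x - t)) := by
      have : (0:ℝ) ≤ Real.log (1 + (s * x - t)) := Real.log_nonneg (by linarith)
      linarith
    have d1 : HasDerivAt (fun x : ℝ => 1 + (s * x - t)) s x := by
      simpa using (((hasDerivAt_id x).const_mul s).sub_const t).const_add 1
    have d2 : HasDerivAt (fun x : ℝ => 2 + Real.log (1 + (s * x - t)))
        (s / (1 + (s * x - t))) x := by
      simpa using (d1.log hu.ne').const_add 2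
    have d3 : HasDerivAt (fun x : ℝ => ((2 + Real.log (1 + (s * x - t))) ^ 2)⁻¹)
        (-(2 * (2 + Real.log (1 + (s * x - t))) * (s / (1 + (s * x - t)))) /
          ((2 + Real.log (1 + (s * x - t))) ^ 2) ^ 2) x := by
      have := (d2.pow 2).inv (pow_pos hw 2).ne'
      refine this.congr_deriv ?_
      simp only [Pi.pow_apply]
      ring
    have := d3.const_mul (-(2 * s)⁻¹)
    refine this.congr_deriv ?_
    field_simp
  · intro x hx
    have hk := key x (mem_Ici.2 hx.out.le)
    have hu : (0:ℝ) < 1 + (s * x - t) := by linarith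
    have hw : (0:ℝ) < 2 + Real.log (1 + (s * x - t)) := by
      have : (0:ℝ) ≤ Real.log (1 + (s * x - t)) := Real.log_nonneg (by linarith)
      linarith
    positivity
  · have h0 : Tendsto (fun x : ℝ => s * x) atTop atTop :=
      Filter.Tendsto.const_mul_atTop hs Filter.tendsto_id
    have h1 : Tendsto (fun x : ℝ => 1 + (s * x - t)) atTop atTop := by
      simpa [sub_eq_add_neg] using
        Filter.tendsto_atTop_add_const_left atTop 1
          (Filter.tendsto_atTop_add_const_right atTop (-t) h0)
    have h2 : Tendsto (fun x : ℝ => ((2 + Real.log (1 + (s * x - t))) ^ 2)⁻¹)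
        atTop (nhds 0) := by
      apply Tendsto.inv_tendsto_atTop
      exact (tendsto_pow_atTop (two_ne_zero)).comp
        (Filter.tendsto_atTop_add_const_left atTop 2 (Real.tendsto_log_atTop.comp h1))
    simpa using h2.const_mul (-(2 * s)⁻¹)


/-- If `f` is continuous on `SL(2,ℝ)` and satisfies the Harish-Chandra type decay bound
`|f(h)| ≤ C ‖h‖⁻¹ (2 + log(1+‖h‖))⁻³`, then for every `g ∈ SL(2,ℝ)` the function
`x ↦ f(g·n(x))` is integrable on `ℝ`, i.e. the average over the right `N₊`-orbit
converges absolutely. -/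
theorem unipotent_average_integrable (f : Matrix (Fin 2) (Fin 2) ℝ → ℝ)
    (hf : ContinuousOn f {h : Matrix (Fin 2) (Fin 2) ℝ | h.det = 1})
    (C : ℝ)
    (hbound : ∀ h : Matrix (Fin 2) (Fin 2) ℝ, h.det = 1 →
      |f h| ≤ C * (frobNorm h)⁻¹ * ((2 + Real.log (1 + frobNorm h)) ^ 3)⁻¹)
    (g : Matrix (Fin 2) (Fin 2) ℝ) (hg : g.det = 1) :
    MeasureTheory.Integrable (fun x : ℝ => f (g * !![1, x; 0, 1])) := by
  set a := g 0 0 with ha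
  set b := g 0 1 with hb
  set c := g 1 0 with hc
  set d := g 1 1 with hd
  have hdetg : a * d - b * c = 1 := by rw [Matrix.det_fin_two] at hg; linarith [hg]
  have hac : 0 < a^2 + c^2 := by
    rcases lt_or_ge 0 (a^2 + c^2) with h | h
    · exact h
    · exfalso; nlinarith [sq_nonneg a, sq_nonneg c, sq_nonneg b, sq_nonneg d,
        sq_nonneg (a*b + c*d), sq_nonneg (a*d - b*c)]
  set s := Real.sqrt (a^2 + c^2) with hsdef
  set t := Real.sqrt (b^2 + d^2) with htdef
  have hspos : 0 < s := Real.sqrt_pos.2 hac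
  have htnn : 0 ≤ t := Real.sqrt_nonneg _
  set R := (t + 2) / s with hRdef
  have hsR : s * R - t = 2 := by
    rw [hRdef]; field_simp; ring
  have hdet1 : ∀ x : ℝ, (g * !![1, x; 0, 1]).det = 1 := by
    intro x
    rw [Matrix.det_mul, hg, Matrix.det_fin_two_of]
    norm_num
  have hfrob : ∀ x : ℝ, frobNorm (g * !![1, x; 0, 1])
      = Real.sqrt (a^2 + (a*x+b)^2 + c^2 + (c*x+d)^2) := by
    intro x
    rw [mul_n_eq, frobNorm_explicit]
  have hlow : ∀ x : ℝ, s * |x| - t ≤ frobNorm (g * !![1, x; 0, 1]) := by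
    intro x
    rw [hfrob]
    exact frob_lower a b c d x
  have hcont : Continuous (fun x : ℝ => f (g * !![1, x; 0, 1])) := by
    have hm : Continuous (fun x : ℝ => g * !![1, x; 0, 1]) := by
      have heq : (fun x : ℝ => g * !![1, x; 0, 1])
          = fun x : ℝ => !![a, a*x+b; c, c*x+d] := funext (mul_n_eq g)
      rw [heq]
      apply continuous_matrix
      intro i j
      fin_cases i <;> fin_cases j <;> simp <;> fun_prop
    exact hf.comp_continuous hm (fun x => hdet1 x)
  -- C is nonnegative
  have hC : 0 ≤ C := by
    have h1 := hbound 1 Matrix.det_one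
    have hfr1 : frobNorm 1 = Real.sqrt 2 := by
      rw [show (1 : Matrix (Fin 2) (Fin 2) ℝ) = !![1, 0; 0, 1] by
        ext i j; fin_cases i <;> fin_cases j <;> simp [Matrix.one_apply],
        frobNorm_explicit]
      norm_num
    rw [hfr1] at h1
    have hs2 : (0:ℝ) < Real.sqrt 2 := by positivity
    have hl2 : (0:ℝ) < 2 + Real.log (1 + Real.sqrt 2) := by
      have : (0:ℝ) ≤ Real.log (1 + Real.sqrt 2) := Real.log_nonneg (by linarith)
      linarith
    by_contra hC0
    push_neg at hC0
    have hq : (0:ℝ) < (√2)⁻¹ * ((2 + Real.log (1 + Real.sqrt 2)) ^ 3)⁻¹ :=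
      mul_pos (inv_pos.2 hs2) (inv_pos.2 (pow_pos hl2 3))
    have hneg : C * (√2)⁻¹ * ((2 + Real.log (1 + Real.sqrt 2)) ^ 3)⁻¹ < 0 := by
      rw [mul_assoc]; exact mul_neg_of_neg_of_pos hC0 hq
    linarith [abs_nonneg (f 1)]
  -- key estimate
  have main_est : ∀ x y : ℝ, 2 < y → y ≤ frobNorm (g * !![1, x; 0, 1]) →
      |f (g * !![1, x; 0, 1])| ≤ 2*C * ((1 + y) * (2 + Real.log (1 + y)) ^ 3)⁻¹ := by
    intro x y hy2 hyF
    have hF := hbound _ (hdet1 x)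
    set F := frobNorm (g * !![1, x; 0, 1]) with hFdef
    have hFpos : (0:ℝ) < F := by linarith
    have hly : (0:ℝ) ≤ Real.log (1 + y) := Real.log_nonneg (by linarith)
    have hwy : (0:ℝ) < 2 + Real.log (1 + y) := by linarith
    have hlF : (0:ℝ) ≤ Real.log (1 + F) := Real.log_nonneg (by linarith)
    have hwF : (0:ℝ) < 2 + Real.log (1 + F) := by linarith
    have l1 : F⁻¹ ≤ y⁻¹ := inv_anti₀ (by linarith) hyF
    have l2 : ((2 + Real.log (1 + F)) ^ 3)⁻¹ ≤ ((2 + Real.log (1 + y)) ^ 3)⁻¹ := by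
      apply inv_anti₀ (pow_pos hwy 3)
      exact pow_le_pow_left₀ hwy.le
        (by linarith [Real.log_le_log (by linarith : (0:ℝ) < 1 + y) (by linarith : 1 + y ≤ 1 + F)]) 3
    have e1 : C * F⁻¹ * ((2 + Real.log (1 + F)) ^ 3)⁻¹
        ≤ C * y⁻¹ * ((2 + Real.log (1 + y)) ^ 3)⁻¹ :=
      mul_le_mul (mul_le_mul_of_nonneg_left l1 hC) l2
        (inv_nonneg.2 (pow_nonneg hwF.le 3))
        (mul_nonneg hC (inv_nonneg.2 (by linarith : (0:ℝ) ≤ y)))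
    have h2y : y⁻¹ ≤ 2 * (1 + y)⁻¹ := by
      rw [inv_eq_one_div, show (2:ℝ) * (1+y)⁻¹ = 2/(1+y) from (div_eq_mul_inv 2 (1+y)).symm,
        div_le_div_iff₀ (by linarith) (by linarith)]
      linarith
    have e2 : C * y⁻¹ * ((2 + Real.log (1 + y)) ^ 3)⁻¹
        ≤ 2*C * ((1 + y) * (2 + Real.log (1 + y)) ^ 3)⁻¹ := by
      rw [mul_inv]
      calc C * y⁻¹ * ((2 + Real.log (1 + y)) ^ 3)⁻¹
          ≤ C * (2 * (1 + y)⁻¹) * ((2 + Real.log (1 + y)) ^ 3)⁻¹ :=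
            mul_le_mul_of_nonneg_right (mul_le_mul_of_nonneg_left h2y hC)
              (inv_nonneg.2 (pow_nonneg hwy.le 3))
        _ = 2*C * ((1 + y)⁻¹ * ((2 + Real.log (1 + y)) ^ 3)⁻¹) := by ring
    linarith
  -- positive tail
  have tailP : IntegrableOn (fun x : ℝ => f (g * !![1, x; 0, 1])) (Ioi R) := by
    apply Integrable.mono'
      ((majorant_integrable s t R hspos hsR.ge).const_mul (2*C))
      hcont.aestronglyMeasurable.restrict
    refine (ae_restrict_iff' measurableSet_Ioi).2 (ae_of_all _ fun x hx => ?_)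
    rw [Real.norm_eq_abs]
    have hxR : R < x := hx
    have hy2 : 2 < s * x - t := by nlinarith [hsR]
    apply main_est x (s * x - t) hy2
    have := hlow x
    nlinarith [le_abs_self x]
  -- negative tail
  have tailN : IntegrableOn (fun x : ℝ => f (g * !![1, x; 0, 1])) (Iio (-R)) := by
    have hN : IntegrableOn (fun x : ℝ => f (g * !![1, -x; 0, 1])) (Ioi R) := by
      apply Integrable.mono'
        ((majorant_integrable s t R hspos hsR.ge).const_mul (2*C))
        ((hcont.comp continuous_neg).aestronglyMeasurable.restrict)
      refine (ae_restrict_iff' measurableSet_Ioi).2 (ae_of_all _ fun x hx => ?_)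
      rw [Real.norm_eq_abs]
      have hxR : R < x := hx
      have hy2 : 2 < s * x - t := by nlinarith [hsR]
      apply main_est (-x) (s * x - t) hy2
      have := hlow (-x)
      rw [abs_neg] at this
      nlinarith [le_abs_self x]
    have hpre : (Neg.neg : ℝ → ℝ) ⁻¹' (Iio (-R)) = Ioi R := by
      ext x; simp
    exact ((Measure.measurePreserving_neg _).integrableOn_comp_preimage
      (Homeomorph.neg ℝ).measurableEmbedding).1 (by
        rw [hpre]
        exact hN)
  -- middle
  have middle : IntegrableOn (fun x : ℝ => f (g * !![1, x; 0, 1])) (Icc (-R) R) :=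
    hcont.integrableOn_Icc
  rw [← integrableOn_univ]
  have hcover : (univ : Set ℝ) ⊆ Iio (-R) ∪ (Icc (-R) R ∪ Ioi R) := by
    intro x _
    rcases lt_or_ge x (-R) with h | h
    · exact Or.inl h
    · rcases le_or_gt x R with h' | h'
      · exact Or.inr (Or.inl ⟨h, h'⟩)
      · exact Or.inr (Or.inr h')
  exact ((tailN.union (middle.union tailP)).mono_set hcover)
end
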